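/- For the Walsh-Paley system and 0 < p < 1, the function f_n = D_{2^{2n+1}} − D_{2^{2n}} satisfies: S_{2^{2n}+1} f_n = w_{2^{2n}}, hence |S_{2^{2n}+1} f_n(x)| = 1 for every x ∈ G, so ‖S_{2^{2n}+1} f_n‖_{L^{p,∞}} = 1 while ‖f_n‖_{H_p} ≤ c_p · 2^{2n(1−1/p)}; consequently ‖S_{2^{2n}+1} f_n‖_{L^{p,∞}} / ‖f_n‖_{H_p} ≥ c_p^{-1} 2^{2n(1/p−1)} → ∞ as n → ∞. -/

import Mathlib

open MeasureTheory ENNReal Filter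
open scoped Classical

noncomputable section

instance : TopologicalSpace (ZMod 2) := ⊥
instance : DiscreteTopology (ZMod 2) := ⟨rfl⟩
instance : MeasurableSpace (ZMod 2) := ⊤
instance : BorelSpace (ZMod 2) := ⟨borel_eq_top_of_discrete.symm⟩
instance : IsTopologicalAddGroup (ZMod 2) where
  continuous_add := continuous_of_discreteTopology
  continuous_neg := continuous_of_discreteTopology

/-- The dyadic group `G = (ℤ/2)^ℕ`. -/
abbrev G2 : Type := ℕ → ZMod 2

/-- Normalized Haar (probability) measure on `G2`. -/
def muG : Measure G2 :=
  Measure.addHaarMeasure ⟨⟨Set.univ, isCompact_univ⟩, by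
    rw [interior_univ]; exact Set.univ_nonempty⟩

/-- Rademacher functions. -/
def rad (k : ℕ) (x : G2) : ℝ := (-1 : ℝ) ^ ((x k).val)

/-- Walsh–Paley functions. -/
def walsh (n : ℕ) (x : G2) : ℝ :=
  ∏ k ∈ Finset.range n, if n.testBit k then rad k x else 1

/-- Walsh–Dirichlet kernels. -/
def dirichlet (n : ℕ) (x : G2) : ℝ := ∑ k ∈ Finset.range n, walsh k x

/-- The cylinder sets `I_n`. -/
def cyl (n : ℕ) : Set G2 := {x | ∀ i < n, x i = 0}

/-- Walsh–Fourier coefficients. -/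
def fhat (f : G2 → ℝ) (k : ℕ) : ℝ := ∫ x, f x * walsh k x ∂muG

/-- Walsh–Fourier partial sums of a function. -/
def funS (f : G2 → ℝ) (n : ℕ) (x : G2) : ℝ :=
  ∑ k ∈ Finset.range n, fhat f k * walsh k x

/-- Partial sums of the Walsh series of a dyadic martingale given by coefficients `c`. -/
def mS (c : ℕ → ℝ) (n : ℕ) (x : G2) : ℝ := ∑ k ∈ Finset.range n, c k * walsh k x

/-- The martingale maximal function. -/
def mMax (c : ℕ → ℝ) (x : G2) : ℝ≥0∞ := ⨆ n : ℕ, (‖mS c (2 ^ n) x‖₊ : ℝ≥0∞)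

/-- The martingale Hardy space quasi-norm `H_p`. -/
def mHp (p : ℝ) (c : ℕ → ℝ) : ℝ≥0∞ := (∫⁻ x, (mMax c x) ^ p ∂muG) ^ (1 / p)

/-- The maximal function of an integrable function. -/
def funMax (f : G2 → ℝ) (x : G2) : ℝ≥0∞ := ⨆ n : ℕ, (‖funS f (2 ^ n) x‖₊ : ℝ≥0∞)

/-- The Hardy space quasi-norm of an integrable function. -/
def funHp (p : ℝ) (f : G2 → ℝ) : ℝ≥0∞ := (∫⁻ x, (funMax f x) ^ p ∂muG) ^ (1 / p)

/-- Weak `L^p` quasi-norm. -/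
def weakLp (p : ℝ) (f : G2 → ℝ) : ℝ≥0∞ :=
  ⨆ t : NNReal, (t : ℝ≥0∞) * (muG {x | (t : ℝ) < |f x|}) ^ (1 / p)


/-- `f_n = D_{2^{2n+1}} - D_{2^{2n}}`. -/
def fwn (n : ℕ) (x : G2) : ℝ := dirichlet (2 ^ (2 * n + 1)) x - dirichlet (2 ^ (2 * n)) x

-- basic instances
instance : IsProbabilityMeasure muG := by
  constructor
  show Measure.addHaarMeasure _ Set.univ = 1
  exact Measure.addHaarMeasure_self (K₀ := ⟨⟨Set.univ, isCompact_univ⟩, by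
    rw [interior_univ]; exact Set.univ_nonempty⟩)

instance : muG.IsAddLeftInvariant := by
  unfold muG; infer_instance

-- rad facts
lemma rad_mul_self (k : ℕ) (x : G2) : rad k x * rad k x = 1 := by
  unfold rad
  rw [← pow_add]
  exact Even.neg_one_pow ⟨(x k).val, rfl⟩

lemma abs_rad (k : ℕ) (x : G2) : |rad k x| = 1 := by
  unfold rad
  rw [abs_pow, abs_neg, abs_one, one_pow]

lemma measurable_rad (k : ℕ) : Measurable (rad k) :=
  (measurable_from_top (f := fun a : ZMod 2 => ((-1:ℝ)) ^ a.val)).comp (measurable_pi_apply k)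

lemma measurable_walsh (n : ℕ) : Measurable (walsh n) := by
  unfold walsh
  apply Finset.measurable_prod
  intro k _
  by_cases h : n.testBit k <;> simp [h, measurable_rad, measurable_const]

lemma abs_walsh (n : ℕ) (x : G2) : |walsh n x| = 1 := by
  unfold walsh
  rw [Finset.abs_prod]
  apply Finset.prod_eq_one
  intro k _
  by_cases h : n.testBit k <;> simp [h, abs_rad]

lemma integrable_walsh (n : ℕ) : Integrable (walsh n) muG := by
  apply Integrable.mono' (integrable_const (1:ℝ)) (measurable_walsh n).aestronglyMeasurable
  filter_upwards with x
  rw [Real.norm_eq_abs, abs_walsh]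

-- extend range lemma
lemma walsh_eq_prod (n N : ℕ) (h : n < 2 ^ N) (x : G2) :
    walsh n x = ∏ k ∈ Finset.range N, if n.testBit k then rad k x else 1 := by
  unfold walsh
  rcases le_total n N with hnN | hNn
  · apply Finset.prod_subset (Finset.range_subset_range.2 hnN)
    intro i hi hni
    simp only [Finset.mem_range, not_lt] at hni
    rw [Nat.testBit_eq_false_of_lt (lt_of_lt_of_le Nat.lt_two_pow_self (Nat.pow_le_pow_right (by norm_num) hni))]
    simp
  · symm
    apply Finset.prod_subset (Finset.range_subset_range.2 hNn)
    intro i hi hni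
    simp only [Finset.mem_range, not_lt] at hni
    rw [Nat.testBit_eq_false_of_lt (lt_of_lt_of_le h (Nat.pow_le_pow_right (by norm_num) hni))]
    simp

-- walsh multiplicativity
lemma walsh_mul (j k : ℕ) (x : G2) : walsh j x * walsh k x = walsh (j ^^^ k) x := by
  set N := j + k + 1 with hN
  have hj : j < 2 ^ N := lt_of_lt_of_le (Nat.lt_two_pow_self (n := j)) (Nat.pow_le_pow_right (by norm_num) (by omega))
  have hk : k < 2 ^ N := lt_of_lt_of_le (Nat.lt_two_pow_self (n := k)) (Nat.pow_le_pow_right (by norm_num) (by omega))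
  have hx : j ^^^ k < 2 ^ N := Nat.xor_lt_two_pow hj hk
  rw [walsh_eq_prod j N hj, walsh_eq_prod k N hk, walsh_eq_prod (j ^^^ k) N hx,
    ← Finset.prod_mul_distrib]
  apply Finset.prod_congr rfl
  intro i _
  rw [Nat.testBit_xor]
  cases hb1 : j.testBit i <;> cases hb2 : k.testBit i <;>
    simp [rad_mul_self]

lemma walsh_zero (x : G2) : walsh 0 x = 1 := by simp [walsh]

lemma walsh_two_pow (m : ℕ) (x : G2) : walsh (2 ^ m) x = rad m x := by
  rw [walsh_eq_prod (2 ^ m) (m + 1) (Nat.pow_lt_pow_right (by norm_num) (by omega)) x]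
  rw [Finset.prod_range_succ]
  have h1 : ∀ i ∈ Finset.range m, (if (2 ^ m).testBit i then rad i x else 1) = 1 := by
    intro i hi
    simp only [Finset.mem_range] at hi
    rw [Nat.testBit_two_pow]
    simp [Nat.ne_of_gt hi]
  rw [Finset.prod_congr rfl h1, Finset.prod_const_one, one_mul, Nat.testBit_two_pow]
  simp

lemma walsh_two_pow_add (m k : ℕ) (hk : k < 2 ^ m) (x : G2) :
    walsh (2 ^ m + k) x = rad m x * walsh k x := by
  have hxor : 2 ^ m ^^^ k = 2 ^ m + k := by
    apply Nat.eq_of_testBit_eq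
    intro i
    rcases lt_trichotomy i m with h | h | h
    · rw [Nat.testBit_two_pow_add_gt h, Nat.testBit_xor, Nat.testBit_two_pow]
      simp [Nat.ne_of_gt h]
    · subst h
      rw [Nat.testBit_two_pow_add_eq, Nat.testBit_xor, Nat.testBit_two_pow]
      simp [Nat.testBit_eq_false_of_lt hk]
    · have h2 : 2 ^ m + k < 2 ^ i := by
        calc 2 ^ m + k < 2 ^ m + 2 ^ m := by omega
        _ = 2 ^ (m + 1) := by ring
        _ ≤ 2 ^ i := Nat.pow_le_pow_right (by norm_num) (by omega)
      rw [Nat.testBit_eq_false_of_lt h2, Nat.testBit_xor, Nat.testBit_two_pow,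
        Nat.testBit_eq_false_of_lt (lt_of_lt_of_le hk (Nat.pow_le_pow_right (by norm_num) (by omega)))]
      simp [Nat.ne_of_lt h]
  rw [← hxor, ← walsh_mul, walsh_two_pow]

lemma dirichlet_two_pow (m : ℕ) (x : G2) :
    dirichlet (2 ^ m) x = if x ∈ cyl m then (2 ^ m : ℝ) else 0 := by
  induction m with
  | zero =>
    simp [dirichlet, walsh_zero, cyl]
  | succ m ih =>
    have step : dirichlet (2 ^ (m + 1)) x = (1 + rad m x) * dirichlet (2 ^ m) x := by
      unfold dirichlet
      have h2 : 2 ^ (m + 1) = 2 ^ m + 2 ^ m := by ring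
      rw [h2, Finset.sum_range_add]
      have : ∀ i ∈ Finset.range (2 ^ m), walsh (2 ^ m + i) x = rad m x * walsh i x := by
        intro i hi
        exact walsh_two_pow_add m i (Finset.mem_range.1 hi) x
      rw [Finset.sum_congr rfl this, ← Finset.mul_sum]
      ring
    rw [step, ih]
    have hcyl : x ∈ cyl (m + 1) ↔ x ∈ cyl m ∧ x m = 0 := by
      constructor
      · intro h; exact ⟨fun i hi => h i (by omega), h m (by omega)⟩
      · rintro ⟨h1, h2⟩ i hi
        rcases Nat.lt_or_ge i m with h' | h'
        · exact h1 i h'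
        · have : i = m := by omega
          rw [this]; exact h2
    by_cases hx : x ∈ cyl m
    · have hrad : x m = 0 ∨ x m = 1 := by
        have h2 : ∀ a : ZMod 2, a = 0 ∨ a = 1 := by decide
        exact h2 (x m)
      rcases hrad with h0 | h1
      · have hc1 : x ∈ cyl (m + 1) := hcyl.2 ⟨hx, h0⟩
        have : rad m x = 1 := by unfold rad; rw [h0]; norm_num
        simp only [hx, hc1, if_true, this]
        ring
      · have hc1 : x ∉ cyl (m + 1) := by
          intro h
          have := (hcyl.1 h).2
          rw [h1] at this
          exact one_ne_zero this
        have : rad m x = -1 := by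
          unfold rad; rw [h1]
          have : ZMod.val (1 : ZMod 2) = 1 := rfl
          rw [this, pow_one]
        simp only [hx, hc1, if_true, if_false, this]
        ring
    · have : x ∉ cyl (m + 1) := fun h => hx (fun i hi => h i (by omega))
      simp [hx, this]

-- translation element
def eG (i : ℕ) : G2 := fun j => if j = i then 1 else 0

lemma rad_add_eG_self (i : ℕ) (x : G2) : rad i (x + eG i) = -rad i x := by
  have key : ∀ a : ZMod 2, ((-1 : ℝ)) ^ ((a + 1).val) = -((-1 : ℝ)) ^ (a.val) := by
    have h2 : ∀ a : ZMod 2, a = 0 ∨ a = 1 := by decide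
    intro a
    rcases h2 a with h | h <;> subst h <;>
      simp [show ((0:ZMod 2)+1).val = 1 from rfl, show ((1:ZMod 2)+1).val = 0 from rfl,
        show ((0:ZMod 2)).val = 0 from rfl, show ((1:ZMod 2)).val = 1 from rfl]
  show ((-1 : ℝ)) ^ (((x + eG i) i).val) = -((-1 : ℝ)) ^ ((x i).val)
  have : (x + eG i) i = x i + 1 := by
    show x i + (if i = i then (1 : ZMod 2) else 0) = x i + 1
    rw [if_pos rfl]
  rw [this, key]

lemma rad_add_eG_ne (j i : ℕ) (h : j ≠ i) (x : G2) : rad j (x + eG i) = rad j x := by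
  show ((-1 : ℝ)) ^ (((x + eG i) j).val) = ((-1 : ℝ)) ^ ((x j).val)
  have : (x + eG i) j = x j := by
    show x j + (if j = i then (1 : ZMod 2) else 0) = x j
    rw [if_neg h, add_zero]
  rw [this]

lemma walsh_add_eG (k i : ℕ) (hi : k.testBit i = true) (x : G2) :
    walsh k (x + eG i) = -walsh k x := by
  set N := k + i + 1 with hN
  have hk : k < 2 ^ N := lt_of_lt_of_le (Nat.lt_two_pow_self (n := k)) (Nat.pow_le_pow_right (by norm_num) (by omega))
  have hiN : i ∈ Finset.range N := Finset.mem_range.2 (by omega)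
  rw [walsh_eq_prod k N hk, walsh_eq_prod k N hk]
  rw [← Finset.mul_prod_erase _ _ hiN, ← Finset.mul_prod_erase _ _ hiN]
  have h1 : ∏ j ∈ (Finset.range N).erase i, (if k.testBit j then rad j (x + eG i) else 1)
      = ∏ j ∈ (Finset.range N).erase i, (if k.testBit j then rad j x else 1) := by
    apply Finset.prod_congr rfl
    intro j hj
    have hji : j ≠ i := Finset.ne_of_mem_erase hj
    rw [rad_add_eG_ne j i hji]
  simp only [hi, if_true]
  rw [h1, rad_add_eG_self]
  ring

lemma integral_walsh (k : ℕ) : ∫ x, walsh k x ∂muG = if k = 0 then 1 else 0 := by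
  by_cases hk : k = 0
  · subst hk
    simp [walsh_zero]
  · rw [if_neg hk]
    have hbit : ∃ i, k.testBit i = true := by
      by_contra hcon
      push_neg at hcon
      apply hk
      apply Nat.eq_of_testBit_eq
      intro i
      rw [Nat.zero_testBit]
      exact Bool.eq_false_iff.2 (hcon i)
    obtain ⟨i, hi⟩ := hbit
    have inv : ∫ x, walsh k x ∂muG = ∫ x, walsh k (eG i + x) ∂muG :=
      (MeasureTheory.integral_add_left_eq_self (walsh k) (eG i)).symm
    have flip : ∫ x, walsh k (eG i + x) ∂muG = -∫ x, walsh k x ∂muG := by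
      have : ∀ x, walsh k (eG i + x) = -walsh k x := by
        intro x
        rw [add_comm, walsh_add_eG k i hi x]
      simp only [this]
      exact integral_neg _
    rw [flip] at inv
    linarith

lemma measurableSet_cyl (m : ℕ) : MeasurableSet (cyl m) := by
  have : cyl m = ⋂ i ∈ Finset.range m, (fun x : G2 => x i) ⁻¹' {0} := by
    ext x
    simp [cyl]
  rw [this]
  apply MeasurableSet.biInter (Finset.range m).countable_toSet
  intro i _
  exact measurable_pi_apply i trivial

lemma muG_cyl (m : ℕ) : muG (cyl m) = ENNReal.ofReal (((2 : ℝ) ^ m)⁻¹) := by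
  have h1 : ∫ x, dirichlet (2 ^ m) x ∂muG = 1 := by
    unfold dirichlet
    rw [MeasureTheory.integral_finset_sum _ (fun k _ => integrable_walsh k)]
    rw [Finset.sum_congr rfl (fun k _ => integral_walsh k)]
    rw [Finset.sum_ite_eq' (Finset.range (2 ^ m)) 0 (fun _ => (1:ℝ))]
    simp [Nat.pos_of_ne_zero]
  have h2 : ∫ x, dirichlet (2 ^ m) x ∂muG
      = (muG (cyl m)).toReal * (2 : ℝ) ^ m := by
    have hind : ∀ x, dirichlet (2 ^ m) x = (cyl m).indicator (fun _ => ((2:ℝ)^m : ℝ)) x := by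
      intro x
      rw [dirichlet_two_pow, Set.indicator_apply]
    rw [integral_congr_ae (Filter.Eventually.of_forall hind)]
    rw [MeasureTheory.integral_indicator_const _ (measurableSet_cyl m)]
    simp [mul_comm, measureReal_def]
  rw [h1] at h2
  have hne : muG (cyl m) ≠ ⊤ := measure_ne_top _ _
  have htr : (muG (cyl m)).toReal = ((2 : ℝ) ^ m)⁻¹ :=
    eq_inv_of_mul_eq_one_left h2.symm
  rw [← htr, ENNReal.ofReal_toReal hne]

lemma fwn_eq_sum (n : ℕ) (x : G2) :
    fwn n x = ∑ k ∈ Finset.Ico (2 ^ (2 * n)) (2 ^ (2 * n + 1)), walsh k x := by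
  unfold fwn dirichlet
  rw [Finset.sum_Ico_eq_sub _ (Nat.pow_le_pow_right (by norm_num) (by omega))]

lemma fhat_fwn (n k : ℕ) :
    fhat (fwn n) k = if k ∈ Finset.Ico (2 ^ (2 * n)) (2 ^ (2 * n + 1)) then 1 else 0 := by
  unfold fhat
  have h1 : ∀ x, fwn n x * walsh k x
      = ∑ j ∈ Finset.Ico (2 ^ (2 * n)) (2 ^ (2 * n + 1)), walsh (j ^^^ k) x := by
    intro x
    rw [fwn_eq_sum, Finset.sum_mul]
    exact Finset.sum_congr rfl (fun j _ => walsh_mul j k x)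
  simp only [h1]
  rw [MeasureTheory.integral_finset_sum _ (fun j _ => integrable_walsh _)]
  rw [Finset.sum_congr rfl (fun j _ => integral_walsh _)]
  have h2 : ∀ j, (j ^^^ k = 0) ↔ (j = k) := fun j => xor_eq_zero_iff
  by_cases hk : k ∈ Finset.Ico (2 ^ (2 * n)) (2 ^ (2 * n + 1))
  · rw [if_pos hk]
    rw [Finset.sum_eq_single k]
    · simp
    · intro j hj hjk
      rw [if_neg (fun h => hjk ((h2 j).1 h))]
    · intro h; exact absurd hk h
  · rw [if_neg hk]
    apply Finset.sum_eq_zero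
    intro j hj
    rw [if_neg]
    intro h
    exact hk ((h2 j).1 h ▸ hj)

lemma funS_fwn (n N : ℕ) (x : G2) :
    funS (fwn n) N x
      = ∑ k ∈ Finset.range N ∩ Finset.Ico (2 ^ (2 * n)) (2 ^ (2 * n + 1)), walsh k x := by
  unfold funS
  rw [← Finset.sum_ite_mem]
  apply Finset.sum_congr rfl
  intro k _
  rw [fhat_fwn]
  by_cases h : k ∈ Finset.Ico (2 ^ (2 * n)) (2 ^ (2 * n + 1)) <;> simp [h]

lemma funS_fwn_eq_walsh (n : ℕ) (x : G2) :
    funS (fwn n) (2 ^ (2 * n) + 1) x = walsh (2 ^ (2 * n)) x := by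
  rw [funS_fwn]
  have : Finset.range (2 ^ (2 * n) + 1) ∩ Finset.Ico (2 ^ (2 * n)) (2 ^ (2 * n + 1))
      = {2 ^ (2 * n)} := by
    ext k
    simp only [Finset.mem_inter, Finset.mem_range, Finset.mem_Ico, Finset.mem_singleton]
    constructor
    · rintro ⟨h1, h2, _⟩; omega
    · rintro rfl
      refine ⟨by omega, le_refl _, Nat.pow_lt_pow_right (by norm_num) (by omega)⟩
  rw [this, Finset.sum_singleton]

lemma funS_fwn_low (n m : ℕ) (hm : m ≤ 2 * n) (x : G2) :
    funS (fwn n) (2 ^ m) x = 0 := by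
  rw [funS_fwn]
  have : Finset.range (2 ^ m) ∩ Finset.Ico (2 ^ (2 * n)) (2 ^ (2 * n + 1)) = ∅ := by
    ext k
    simp only [Finset.mem_inter, Finset.mem_range, Finset.mem_Ico, Finset.notMem_empty,
      iff_false, not_and]
    intro h1 h2
    have := Nat.pow_le_pow_right (show 1 ≤ 2 by norm_num) hm
    omega
  rw [this, Finset.sum_empty]

lemma funS_fwn_high (n m : ℕ) (hm : 2 * n + 1 ≤ m) (x : G2) :
    funS (fwn n) (2 ^ m) x = fwn n x := by
  rw [funS_fwn, fwn_eq_sum]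
  congr 1
  rw [Finset.inter_eq_right]
  intro k hk
  simp only [Finset.mem_Ico] at hk
  simp only [Finset.mem_range]
  have := Nat.pow_le_pow_right (show 1 ≤ 2 by norm_num) hm
  omega

lemma funMax_fwn (n : ℕ) (x : G2) : funMax (fwn n) x = (‖fwn n x‖₊ : ℝ≥0∞) := by
  unfold funMax
  apply le_antisymm
  · apply iSup_le
    intro m
    rcases le_or_gt m (2 * n) with hm | hm
    · rw [funS_fwn_low n m hm]
      simp
    · rw [funS_fwn_high n m (by omega)]
  · apply le_iSup_of_le (2 * n + 1)
    rw [funS_fwn_high n (2 * n + 1) (le_refl _)]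

lemma fwn_bound (n : ℕ) (x : G2) :
    |fwn n x| ≤ (cyl (2 * n)).indicator (fun _ => ((2:ℝ) ^ (2 * n))) x := by
  unfold fwn
  rw [dirichlet_two_pow, dirichlet_two_pow, Set.indicator_apply]
  by_cases h1 : x ∈ cyl (2 * n)
  · rw [if_pos h1]
    by_cases h2 : x ∈ cyl (2 * n + 1)
    · rw [if_pos h2]
      rw [show (2:ℝ) ^ (2 * n + 1) - 2 ^ (2 * n) = 2 ^ (2 * n) by ring]
      rw [abs_of_nonneg (by positivity)]
    · rw [if_neg h2, zero_sub, abs_neg, abs_of_nonneg (by positivity)]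
  · have h2 : x ∉ cyl (2 * n + 1) := fun h => h1 (fun i hi => h i (by omega))
    rw [if_neg h1, if_neg h2]
    simp

lemma funHp_fwn_le (p : ℝ) (hp : 0 < p) (n : ℕ) :
    funHp p (fwn n) ≤ ENNReal.ofReal ((2:ℝ) ^ ((2 * n : ℝ) * (1 - 1 / p))) := by
  have hp' : p ≠ 0 := ne_of_gt hp
  have h1p : (0:ℝ) ≤ 1 / p := by positivity
  set C : ℝ≥0∞ := ENNReal.ofReal ((2:ℝ) ^ (2 * n)) with hC
  have key : ∫⁻ x, (funMax (fwn n) x) ^ p ∂muG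
      ≤ C ^ p * muG (cyl (2 * n)) := by
    have pw : ∀ x, (funMax (fwn n) x) ^ p
        ≤ (cyl (2 * n)).indicator (fun _ => C ^ p) x := by
      intro x
      rw [funMax_fwn, Set.indicator_apply]
      by_cases hx : x ∈ cyl (2 * n)
      · rw [if_pos hx]
        apply ENNReal.rpow_le_rpow _ (le_of_lt hp)
        rw [show (‖fwn n x‖₊ : ℝ≥0∞) = ENNReal.ofReal ‖fwn n x‖ by rw [Real.norm_eq_abs, ← Real.enorm_eq_ofReal_abs]; rfl, Real.norm_eq_abs, hC]
        apply ENNReal.ofReal_le_ofReal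
        have := fwn_bound n x
        rwa [Set.indicator_of_mem hx] at this
      · rw [if_neg hx]
        have h0 : fwn n x = 0 := by
          have := fwn_bound n x
          rw [Set.indicator_of_notMem hx] at this
          exact abs_eq_zero.1 (le_antisymm this (abs_nonneg _))
        rw [h0]
        simp [ENNReal.zero_rpow_of_pos hp]
    calc ∫⁻ x, (funMax (fwn n) x) ^ p ∂muG
        ≤ ∫⁻ x, (cyl (2 * n)).indicator (fun _ => C ^ p) x ∂muG :=
          lintegral_mono pw
      _ = C ^ p * muG (cyl (2 * n)) := by
          rw [lintegral_indicator (measurableSet_cyl _), setLIntegral_const]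
  have step : funHp p (fwn n) ≤ (C ^ p * muG (cyl (2 * n))) ^ (1 / p) :=
    ENNReal.rpow_le_rpow key h1p
  have calc2 : (C ^ p * muG (cyl (2 * n))) ^ (1 / p)
      = ENNReal.ofReal ((2:ℝ) ^ ((2 * n : ℝ) * (1 - 1 / p))) := by
    rw [muG_cyl, ENNReal.mul_rpow_of_nonneg _ _ h1p]
    rw [← ENNReal.rpow_mul, mul_one_div, div_self hp', ENNReal.rpow_one]
    rw [ENNReal.ofReal_rpow_of_pos (by positivity), hC]
    rw [← ENNReal.ofReal_mul (by positivity)]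
    congr 1
    have h2 : ((2:ℝ) ^ (2 * n) : ℝ)⁻¹ = (2:ℝ) ^ (-(((2 * n : ℕ)) : ℝ)) := by
      rw [Real.rpow_neg (by norm_num), Real.rpow_natCast]
    rw [h2, ← Real.rpow_mul (by norm_num : (0:ℝ) ≤ 2),
      show ((2:ℝ) ^ (2 * n) : ℝ) = (2:ℝ) ^ (((2 * n : ℕ)) : ℝ) from (Real.rpow_natCast 2 (2 * n)).symm,
      ← Real.rpow_add (by norm_num : (0:ℝ) < 2)]
    congr 1
    push_cast
    field_simp
    ring
  rw [calc2] at step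
  exact step

lemma weakLp_eq_one (p : ℝ) (hp : 0 < p) (f : G2 → ℝ) (hf : ∀ x, |f x| = 1) :
    weakLp p f = 1 := by
  have hset : ∀ t : NNReal, {x : G2 | (t : ℝ) < |f x|} = if (t : ℝ) < 1 then Set.univ else ∅ := by
    intro t
    by_cases ht : (t : ℝ) < 1
    · rw [if_pos ht]
      ext x; simp [hf, ht]
    · rw [if_neg ht]
      ext x; simp [hf, ht]
  apply le_antisymm
  · apply iSup_le
    intro t
    rw [hset t]
    by_cases ht : (t : ℝ) < 1
    · rw [if_pos ht, measure_univ, ENNReal.one_rpow, mul_one]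
      exact ENNReal.coe_le_one_iff.2 (le_of_lt (by exact_mod_cast ht))
    · rw [if_neg ht, measure_empty, ENNReal.zero_rpow_of_pos (by positivity), mul_zero]
      exact zero_le
  · by_contra hcon
    push_neg at hcon
    obtain ⟨r, hr1, hr2⟩ := ENNReal.lt_iff_exists_nnreal_btwn.1 hcon
    have hrlt : (r : ℝ) < 1 := by exact_mod_cast hr2
    have term : (r : ℝ≥0∞) * (muG {x | (r : ℝ) < |f x|}) ^ (1 / p) = r := by
      rw [hset r, if_pos hrlt, measure_univ, ENNReal.one_rpow, mul_one]
    have : (r : ℝ≥0∞) ≤ weakLp p f := by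
      rw [← term]
      exact le_iSup (fun t : NNReal => (t : ℝ≥0∞) * (muG {x | (t : ℝ) < |f x|}) ^ (1 / p)) r
    exact absurd (lt_of_le_of_lt this hr1) (lt_irrefl _)

theorem stmt6 (p : ℝ) (hp : 0 < p) (hp1 : p < 1) :
    (∀ (n : ℕ) (x : G2), funS (fwn n) (2 ^ (2 * n) + 1) x = walsh (2 ^ (2 * n)) x) ∧
    (∀ (n : ℕ) (x : G2), |funS (fwn n) (2 ^ (2 * n) + 1) x| = 1) ∧
    (∀ n : ℕ, weakLp p (funS (fwn n) (2 ^ (2 * n) + 1)) = 1) ∧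
    ∃ c : ℝ, 0 < c ∧
      (∀ n : ℕ, funHp p (fwn n) ≤
        ENNReal.ofReal (c * (2 : ℝ) ^ ((2 * n : ℝ) * (1 - 1 / p)))) ∧
      Tendsto (fun n : ℕ =>
          weakLp p (funS (fwn n) (2 ^ (2 * n) + 1)) / funHp p (fwn n)) atTop (nhds ⊤) := by
  have part1 : ∀ (n : ℕ) (x : G2), funS (fwn n) (2 ^ (2 * n) + 1) x = walsh (2 ^ (2 * n)) x :=
    funS_fwn_eq_walsh
  have part2 : ∀ (n : ℕ) (x : G2), |funS (fwn n) (2 ^ (2 * n) + 1) x| = 1 := by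
    intro n x
    rw [part1 n x]
    exact abs_walsh _ _
  have part3 : ∀ n : ℕ, weakLp p (funS (fwn n) (2 ^ (2 * n) + 1)) = 1 :=
    fun n => weakLp_eq_one p hp _ (part2 n)
  refine ⟨part1, part2, part3, 1, one_pos, ?_, ?_⟩
  · intro n
    rw [one_mul]
    exact funHp_fwn_le p hp n
  · have hzero : Tendsto (fun n : ℕ => funHp p (fwn n)) atTop (nhds 0) := by
      set r : ℝ := (2:ℝ) ^ (2 * (1 - 1 / p)) with hr
      have hr0 : 0 ≤ r := Real.rpow_nonneg (by norm_num) _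
      have hr1 : r < 1 := by
        apply Real.rpow_lt_one_of_one_lt_of_neg (by norm_num)
        have h1p : 1 < 1 / p := by
          rw [lt_div_iff₀ hp]; linarith
        linarith
      have hrn : Tendsto (fun n : ℕ => r ^ n) atTop (nhds 0) :=
        tendsto_pow_atTop_nhds_zero_of_lt_one hr0 hr1
      have hofR : Tendsto (fun n : ℕ => ENNReal.ofReal (r ^ n)) atTop (nhds 0) := by
        have := (ENNReal.continuous_ofReal.tendsto 0).comp hrn
        simpa [Function.comp_def] using this
      have hB : ∀ n : ℕ, ENNReal.ofReal ((2:ℝ) ^ ((2 * n : ℝ) * (1 - 1 / p)))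
          = ENNReal.ofReal (r ^ n) := by
        intro n
        congr 1
        rw [hr, ← Real.rpow_natCast ((2:ℝ) ^ (2 * (1 - 1 / p))) n,
          ← Real.rpow_mul (by norm_num)]
        congr 1
        ring
      apply tendsto_of_tendsto_of_tendsto_of_le_of_le tendsto_const_nhds hofR
        (fun n => zero_le) (fun n => ?_)
      rw [← hB n]
      exact funHp_fwn_le p hp n
    have hinv : Tendsto (fun n : ℕ => (funHp p (fwn n))⁻¹) atTop (nhds ⊤) := by
      have := ENNReal.tendsto_inv_iff.2 hzero
      simpa using this
    apply hinv.congr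
    intro n
    rw [part3 n, ← one_div]

end
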